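/- arXiv:2205.14632 — 2 statements merged into one kernel-verified Lean document; each statement's English description precedes it below -/
import Mathlib

section
/- Let k > 0 and μ ∈ ℝ. Set a_T := 1 − e^{−kT}, d_T := T + (e^{−kT} − 1)/k, l_T(s) := (1/k)(1 − e^{−k(T−s)}), n_T(s) := (1/(2k))(e^{−k(2T−s)} − 1), and h_{1,T}(s) := (2μ/T)(l_T(s) + n_T(s)) − (2 d_T / T²) l_T(s) for s ∈ [0,T]. There exists a constant C, depending only on k, μ, β, C_β, C'_β, such that for all T ≥ 1, |∥h_{1,T}∥²_H| ≤ C T^{2β−2}. -/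
open MeasureTheory

open intervalIntegral in
private lemma abs_sub_rpow_helper {p : ℝ} (hp : -1 < p) {c T : ℝ} (h0 : 0 ≤ c) (hcT : c ≤ T) :
    IntervalIntegrable (fun x => |c - x| ^ p) volume 0 T ∧
      ∫ x in (0:ℝ)..T, |c - x| ^ p = (c ^ (p+1) + (T - c) ^ (p+1)) / (p+1) := by
  have hp1 : 0 < p + 1 := by linarith
  have e1 : ∀ x ∈ Set.uIcc (0:ℝ) c, |c - x| ^ p = (c - x) ^ p := by
    intro x hx
    rw [Set.uIcc_of_le h0] at hx
    rw [abs_of_nonneg (by linarith [hx.2])]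
  have i1' : IntervalIntegrable (fun x => (c - x) ^ p) volume 0 c := by
    simpa using (intervalIntegrable_rpow' hp (a := c) (b := 0)).comp_sub_left c
  have i1 : IntervalIntegrable (fun x => |c - x| ^ p) volume 0 c := by
    refine i1'.congr_ae ?_
    refine (ae_restrict_iff' measurableSet_uIoc).mpr (Filter.Eventually.of_forall ?_)
    intro x hx
    exact (e1 x (Set.uIoc_subset_uIcc hx)).symm
  have v1 : ∫ x in (0:ℝ)..c, |c - x| ^ p = c ^ (p+1) / (p+1) := by
    rw [integral_congr e1, integral_comp_sub_left (fun x => x ^ p) c, sub_self, sub_zero,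
      integral_rpow (Or.inl hp), Real.zero_rpow (by linarith), sub_zero]
  have e2 : ∀ x ∈ Set.uIcc c T, |c - x| ^ p = (x - c) ^ p := by
    intro x hx
    rw [Set.uIcc_of_le hcT] at hx
    rw [abs_sub_comm, abs_of_nonneg (by linarith [hx.1])]
  have i2' : IntervalIntegrable (fun x => (x - c) ^ p) volume c T := by
    simpa using (intervalIntegrable_rpow' hp (a := 0) (b := T - c)).comp_sub_right c
  have i2 : IntervalIntegrable (fun x => |c - x| ^ p) volume c T := by
    refine i2'.congr_ae ?_
    refine (ae_restrict_iff' measurableSet_uIoc).mpr (Filter.Eventually.of_forall ?_)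
    intro x hx
    exact (e2 x (Set.uIoc_subset_uIcc hx)).symm
  have v2 : ∫ x in c..T, |c - x| ^ p = (T - c) ^ (p+1) / (p+1) := by
    rw [integral_congr e2, integral_comp_sub_right (fun x => x ^ p) c, sub_self,
      integral_rpow (Or.inl hp), Real.zero_rpow (by linarith), sub_zero]
  refine ⟨i1.trans i2, ?_⟩
  rw [← integral_add_adjacent_intervals i1 i2, v1, v2]
  ring

set_option maxHeartbeats 1000000 in
open intervalIntegral in
/-- `|‖h_{1,T}‖²_H| ≤ C T^{2β−2}` for `T ≥ 1`, where
`h_{1,T}(s) = (2μ/T)(l_T(s) + n_T(s)) − (2 d_T / T²) l_T(s)`. -/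
theorem h1T_norm_H_bound
    (β : ℝ) (hβ : β ∈ Set.Ioo (1/2 : ℝ) 1)
    (Cβ Cβ' : ℝ) (hCβ : 0 < Cβ) (hCβ' : 0 ≤ Cβ')
    (D : ℝ → ℝ → ℝ) (hD : Measurable (Function.uncurry D))
    (hDbound : ∀ t s : ℝ, 0 < t → 0 < s → t ≠ s →
      |D t s - Cβ * |t - s| ^ (2 * β - 2)| ≤ Cβ' * (t * s) ^ (β - 1))
    (k : ℝ) (hk : 0 < k) (μ : ℝ) :
    ∃ C : ℝ, ∀ T : ℝ, 1 ≤ T →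
      |∫ r₁ in (0:ℝ)..T, ∫ r₂ in (0:ℝ)..T,
        (let lT := fun s : ℝ => (1/k) * (1 - Real.exp (-k * (T - s)));
         let nT := fun s : ℝ => (1/(2*k)) * (Real.exp (-k * (2*T - s)) - 1);
         let dT := T + (Real.exp (-k * T) - 1) / k;
         let h1T := fun s : ℝ => (2*μ/T) * (lT s + nT s) - (2 * dT / T^2) * lT s;
         h1T r₁ * h1T r₂ * D r₁ r₂)| ≤ C * T ^ (2 * β - 2) := by
  obtain ⟨hβ1, hβ2⟩ := hβ
  set p : ℝ := 2 * β - 2 with hpdef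
  set q : ℝ := β - 1 with hqdef
  have hp : -1 < p := by rw [hpdef]; linarith
  have hq : -1 < q := by rw [hqdef]; linarith
  have hp1 : 0 < p + 1 := by linarith
  have hq1 : 0 < q + 1 := by rw [hqdef]; linarith
  set M : ℝ := 3 * |μ| / k + 2 / k + 2 / k ^ 2 with hMdef
  have hM0 : 0 ≤ M := by positivity
  refine ⟨M ^ 2 * (2 * Cβ / (p + 1) + Cβ' / (q + 1) ^ 2), ?_⟩
  intro T hT
  have hT0 : (0:ℝ) < T := lt_of_lt_of_le one_pos hT
  set lT := fun s : ℝ => (1/k) * (1 - Real.exp (-k * (T - s))) with hlT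
  set nT := fun s : ℝ => (1/(2*k)) * (Real.exp (-k * (2*T - s)) - 1) with hnT
  set dT := T + (Real.exp (-k * T) - 1) / k with hdT
  set h1 := fun s : ℝ => (2*μ/T) * (lT s + nT s) - (2 * dT / T^2) * lT s with hh1
  show |∫ r₁ in (0:ℝ)..T, ∫ r₂ in (0:ℝ)..T, h1 r₁ * h1 r₂ * D r₁ r₂|
      ≤ M ^ 2 * (2 * Cβ / (p + 1) + Cβ' / (q + 1) ^ 2) * T ^ p
  -- pointwise bound on h1
  have hM : ∀ s ∈ Set.Icc (0:ℝ) T, |h1 s| ≤ M / T := by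
    intro s hs
    obtain ⟨hs0, hsT⟩ := hs
    have hE1 : Real.exp (-k*(T-s)) ≤ 1 := Real.exp_le_one_iff.mpr (by nlinarith)
    have hE1' : 0 < Real.exp (-k*(T-s)) := Real.exp_pos _
    have hE2 : Real.exp (-k*(2*T-s)) ≤ 1 := Real.exp_le_one_iff.mpr (by nlinarith)
    have hE2' : 0 < Real.exp (-k*(2*T-s)) := Real.exp_pos _
    have hE3 : Real.exp (-k*T) ≤ 1 := Real.exp_le_one_iff.mpr (by nlinarith)
    have hE3' : 0 < Real.exp (-k*T) := Real.exp_pos _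
    have hl : |lT s| ≤ 1/k := by
      rw [hlT]
      simp only []
      rw [abs_mul, abs_of_pos (by positivity : (0:ℝ) < 1/k),
        abs_of_nonneg (by linarith : (0:ℝ) ≤ 1 - Real.exp (-k*(T-s)))]
      nlinarith [one_div_pos.mpr hk]
    have hn : |nT s| ≤ 1/(2*k) := by
      rw [hnT]
      simp only []
      rw [abs_mul, abs_of_pos (by positivity : (0:ℝ) < 1/(2*k)), abs_of_nonpos (by linarith)]
      nlinarith [one_div_pos.mpr (by positivity : (0:ℝ) < 2*k)]
    have hd : |dT| ≤ T + 1/k := by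
      rw [hdT]
      have h2 : |(Real.exp (-k*T) - 1)/k| ≤ 1/k := by
        rw [abs_div, abs_of_pos hk, abs_of_nonpos (by linarith)]
        rw [div_le_div_iff₀ hk hk]
        nlinarith
      calc |T + (Real.exp (-k*T) - 1)/k| ≤ |T| + |(Real.exp (-k*T) - 1)/k| := abs_add_le _ _
        _ ≤ T + 1/k := by rw [abs_of_pos hT0]; linarith
    rw [hh1]
    simp only []
    calc |(2*μ/T) * (lT s + nT s) - (2 * dT / T^2) * lT s|
        ≤ |(2*μ/T) * (lT s + nT s)| + |(2 * dT / T^2) * lT s| := abs_sub _ _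
      _ = (2*|μ|/T) * |lT s + nT s| + (2 * |dT| / T^2) * |lT s| := by
          rw [abs_mul, abs_mul, abs_div, abs_div, abs_of_pos hT0,
            abs_of_pos (by positivity : (0:ℝ) < T^2), abs_mul, abs_mul]
          norm_num
      _ ≤ (2*|μ|/T) * (1/k + 1/(2*k)) + (2 * (T + 1/k) / T^2) * (1/k) := by
          refine add_le_add (mul_le_mul_of_nonneg_left
            ((abs_add_le _ _).trans (add_le_add hl hn)) (by positivity)) ?_
          refine mul_le_mul ?_ hl (abs_nonneg _) (by positivity)
          gcongr
      _ ≤ M / T := by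
          rw [hMdef]
          have key : (3*|μ|/k + 2/k + 2/k^2)/T
              - ((2*|μ|/T) * (1/k + 1/(2*k)) + (2*(T+1/k)/T^2) * (1/k))
              = 2*(T-1)/(k^2*T^2) := by
            field_simp
            ring
          nlinarith [div_nonneg (by nlinarith : (0:ℝ) ≤ 2*(T-1))
            (by positivity : (0:ℝ) ≤ k^2*T^2)]
  -- the bound function for the outer integral
  set A : ℝ := (M/T)^2 * Cβ * (2 * T ^ (p+1) / (p+1)) with hA
  set B : ℝ := (M/T)^2 * Cβ' * (T ^ (q+1) / (q+1)) with hB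
  -- inner bound
  have hinner : ∀ r₁ ∈ Set.Ioc (0:ℝ) T,
      |∫ r₂ in (0:ℝ)..T, h1 r₁ * h1 r₂ * D r₁ r₂| ≤ A + B * r₁ ^ q := by
    intro r₁ hr₁
    obtain ⟨hr₁0, hr₁T⟩ := hr₁
    set g : ℝ → ℝ := fun r₂ => (M/T)^2 * (Cβ * |r₁ - r₂| ^ p + Cβ' * r₁ ^ q * r₂ ^ q) with hg
    have hint1 := abs_sub_rpow_helper hp hr₁0.le hr₁T
    have gi : IntervalIntegrable g volume 0 T :=
      ((hint1.1.const_mul Cβ).add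
        ((intervalIntegrable_rpow' hq).const_mul (Cβ' * r₁ ^ q))).const_mul ((M/T)^2)
    have haebound : ∀ᵐ r₂ ∂volume.restrict (Set.uIoc (0:ℝ) T),
        ‖h1 r₁ * h1 r₂ * D r₁ r₂‖ ≤ g r₂ := by
      have hne : ∀ᵐ r₂ ∂volume.restrict (Set.uIoc (0:ℝ) T), r₂ ≠ r₁ := by
        refine ae_restrict_of_ae ?_
        rw [ae_iff]
        simpa using measure_singleton (μ := volume) r₁
      filter_upwards [ae_restrict_mem measurableSet_uIoc, hne] with r₂ hmem hner
      rw [Set.uIoc_of_le hT0.le] at hmem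
      obtain ⟨hr₂0, hr₂T⟩ := hmem
      have hD1 : |D r₁ r₂| ≤ Cβ * |r₁ - r₂| ^ p + Cβ' * r₁ ^ q * r₂ ^ q := by
        have h0 := hDbound r₁ r₂ hr₁0 hr₂0 (Ne.symm hner)
        have h1' : |D r₁ r₂| ≤ Cβ * |r₁ - r₂| ^ p + Cβ' * (r₁ * r₂) ^ q := by
          have htri := abs_sub_abs_le_abs_sub (D r₁ r₂) (Cβ * |r₁ - r₂| ^ p)
          have habs : |Cβ * |r₁ - r₂| ^ p| = Cβ * |r₁ - r₂| ^ p := by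
            rw [abs_of_nonneg]; positivity
          linarith [habs.le, habs.ge]
        rwa [Real.mul_rpow hr₁0.le hr₂0.le, ← mul_assoc] at h1'
      have hb1 : |h1 r₁| ≤ M/T := hM r₁ ⟨hr₁0.le, hr₁T⟩
      have hb2 : |h1 r₂| ≤ M/T := hM r₂ ⟨hr₂0.le, hr₂T⟩
      have hMT : (0:ℝ) ≤ M/T := by positivity
      calc ‖h1 r₁ * h1 r₂ * D r₁ r₂‖ = |h1 r₁| * |h1 r₂| * |D r₁ r₂| := by
            rw [Real.norm_eq_abs, abs_mul, abs_mul]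
        _ ≤ (M/T) * (M/T) * (Cβ * |r₁ - r₂| ^ p + Cβ' * r₁ ^ q * r₂ ^ q) :=
            mul_le_mul (mul_le_mul hb1 hb2 (abs_nonneg _) hMT) hD1 (abs_nonneg _)
              (by positivity)
        _ = g r₂ := by rw [hg]; ring
    have key := norm_integral_le_of_norm_le hT0.le ((ae_restrict_iff' (measurableSet_Ioc (a := (0:ℝ)) (b := T))).mp (by rw [← Set.uIoc_of_le hT0.le]; exact haebound)) gi
    rw [Real.norm_eq_abs] at key
    refine key.trans ?_
    have hval : ∫ r₂ in (0:ℝ)..T, g r₂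
        = (M/T)^2 * (Cβ * ((r₁ ^ (p+1) + (T - r₁) ^ (p+1)) / (p+1))
            + Cβ' * r₁ ^ q * (T ^ (q+1) / (q+1))) := by
      simp only [hg]
      rw [intervalIntegral.integral_const_mul,
        integral_add (hint1.1.const_mul Cβ) ((intervalIntegrable_rpow' hq).const_mul _),
        intervalIntegral.integral_const_mul, intervalIntegral.integral_const_mul, hint1.2,
        integral_rpow (Or.inl hq), Real.zero_rpow (by linarith), sub_zero]
    rw [hval]
    have hr1p : (0:ℝ) ≤ r₁ ^ (p+1) := Real.rpow_nonneg hr₁0.le _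
    have hr2p : (0:ℝ) ≤ (T - r₁) ^ (p+1) := Real.rpow_nonneg (by linarith) _
    have hr3p : (0:ℝ) ≤ r₁ ^ q := Real.rpow_nonneg hr₁0.le _
    have hsum : r₁ ^ (p+1) + (T - r₁) ^ (p+1) ≤ 2 * T ^ (p+1) := by
      have h1' : r₁ ^ (p+1) ≤ T ^ (p+1) :=
        Real.rpow_le_rpow hr₁0.le hr₁T (by linarith)
      have h2' : (T - r₁) ^ (p+1) ≤ T ^ (p+1) :=
        Real.rpow_le_rpow (by linarith) (by linarith) (by linarith)
      linarith
    have hle : (M/T)^2 * (Cβ * ((r₁ ^ (p+1) + (T - r₁) ^ (p+1)) / (p+1))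
        + Cβ' * r₁ ^ q * (T ^ (q+1) / (q+1)))
        ≤ (M/T)^2 * (Cβ * (2 * T ^ (p+1) / (p+1)) + Cβ' * r₁ ^ q * (T ^ (q+1) / (q+1))) := by
      gcongr
    refine hle.trans (le_of_eq ?_)
    rw [hA, hB]; ring
  -- outer bound
  have Gi : IntervalIntegrable (fun r₁ => A + B * r₁ ^ q) volume 0 T :=
    intervalIntegrable_const.add ((intervalIntegrable_rpow' hq).const_mul B)
  have haeouter : ∀ᵐ r₁ ∂volume.restrict (Set.uIoc (0:ℝ) T),
      ‖∫ r₂ in (0:ℝ)..T, h1 r₁ * h1 r₂ * D r₁ r₂‖ ≤ A + B * r₁ ^ q := by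
    filter_upwards [ae_restrict_mem measurableSet_uIoc] with r₁ hmem
    rw [Set.uIoc_of_le hT0.le] at hmem
    rw [Real.norm_eq_abs]
    exact hinner r₁ hmem
  have key := norm_integral_le_of_norm_le hT0.le ((ae_restrict_iff' (measurableSet_Ioc (a := (0:ℝ)) (b := T))).mp (by rw [← Set.uIoc_of_le hT0.le]; exact haeouter)) Gi
  rw [Real.norm_eq_abs] at key
  refine key.trans ?_
  have hGval : ∫ r₁ in (0:ℝ)..T, (A + B * r₁ ^ q) = A * T + B * (T ^ (q+1) / (q+1)) := by
    rw [integral_add intervalIntegrable_const ((intervalIntegrable_rpow' hq).const_mul B),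
      intervalIntegral.integral_const, intervalIntegral.integral_const_mul, integral_rpow (Or.inl hq),
      Real.zero_rpow (by linarith), sub_zero]
    simp [mul_comm]
  rw [hGval]
  -- final algebra
  have hu : T ^ (p+1) = T ^ p * T := Real.rpow_add_one hT0.ne' p
  have hTq1 : T ^ (q+1) * T ^ (q+1) = T ^ p * T ^ 2 := by
    rw [← Real.rpow_add hT0, ← Real.rpow_natCast T 2, ← Real.rpow_add hT0]
    congr 1
    push_cast
    rw [hpdef, hqdef]; ring
  have term1 : A * T = M ^ 2 * (2 * Cβ / (p + 1)) * T ^ p := by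
    rw [hA, hu]; field_simp
  have term2 : B * (T ^ (q+1) / (q+1)) = M ^ 2 * (Cβ' / (q+1)^2) * T ^ p := by
    rw [hB]
    have hB' : (M/T)^2 * Cβ' * (T ^ (q+1) / (q+1)) * (T ^ (q+1) / (q+1))
        = M^2 * Cβ' * (T ^ (q+1) * T ^ (q+1)) / (T^2 * (q+1)^2) := by ring
    rw [hB', hTq1]
    field_simp
  have hsumval : A * T + B * (T ^ (q+1) / (q+1))
      = M ^ 2 * (2 * Cβ / (p + 1) + Cβ' / (q + 1) ^ 2) * T ^ p := by
    rw [term1, term2]; ring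
  rw [hsumval]
end

section
/- Let β ∈ (1/2, 3/4), k > 0, and σ_β² := (4β−1)(1 + Γ(3−4β)Γ(4β−1)/(Γ(2β)Γ(2−2β))). For T > 0 and z ∈ ℝ with 1 + z σ_β/(2β√(kT)) > 0, set ν_T(z) := √(kT/σ_β²) ((1 + z σ_β/(2β√(kT)))^{−2β} − 1). Then there exist constants C > 0 and T₀ > 0 such that for all T ≥ T₀, sup over all z ∈ ℝ with 1 + z σ_β/(2β√(kT)) > 0 of |(1 − Φ(ν_T(z))) − Φ(z)| ≤ C/√T. -/
open MeasureTheory Set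

/-- The cumulative distribution function of the standard normal distribution. -/
noncomputable def stdNormalCDF (z : ℝ) : ℝ :=
  ∫ x in Set.Iic z, Real.exp (-x ^ 2 / 2) / Real.sqrt (2 * Real.pi)

noncomputable def gaussPdf (x : ℝ) : ℝ := Real.exp (-x ^ 2 / 2) / Real.sqrt (2 * Real.pi)

lemma gaussPdf_nonneg (x : ℝ) : 0 ≤ gaussPdf x :=
  div_nonneg (Real.exp_nonneg _) (Real.sqrt_nonneg _)

lemma gaussPdf_int : Integrable gaussPdf := by
  have : Integrable (fun x : ℝ => Real.exp (-(1/2) * x ^ 2)) := integrable_exp_neg_mul_sq (by norm_num)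
  have h := this.div_const (Real.sqrt (2 * Real.pi))
  refine h.congr (Filter.Eventually.of_forall fun x => ?_)
  simp only [gaussPdf]; ring_nf

lemma gaussPdf_total : ∫ x : ℝ, gaussPdf x = 1 := by
  have h := integral_gaussian (1/2)
  have h2 : ∫ x : ℝ, Real.exp (-x ^ 2 / 2) = Real.sqrt (2 * Real.pi) := by
    rw [show (2 * Real.pi) = Real.pi / (1/2) by ring, ← h]
    congr 1; ext x; ring_nf
  have hs : (0:ℝ) < Real.sqrt (2 * Real.pi) := Real.sqrt_pos.2 (by positivity)
  simp only [gaussPdf]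
  rw [integral_div, h2, div_self hs.ne']

lemma cdf_eq (z : ℝ) : stdNormalCDF z = ∫ x in Iic z, gaussPdf x := rfl

lemma cdf_mono {a b : ℝ} (h : a ≤ b) : stdNormalCDF a ≤ stdNormalCDF b := by
  rw [cdf_eq, cdf_eq]
  exact setIntegral_mono_set gaussPdf_int.integrableOn
    (Filter.Eventually.of_forall fun x => gaussPdf_nonneg x)
    (HasSubset.Subset.eventuallyLE (Iic_subset_Iic.2 h))

lemma cdf_nonneg (z : ℝ) : 0 ≤ stdNormalCDF z :=
  setIntegral_nonneg measurableSet_Iic fun x _ => gaussPdf_nonneg x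

lemma one_sub_cdf (z : ℝ) : 1 - stdNormalCDF z = ∫ x in Ioi z, gaussPdf x := by
  have := intervalIntegral.integral_Iic_add_Ioi (b := z) gaussPdf_int.integrableOn gaussPdf_int.integrableOn
  rw [cdf_eq]; rw [gaussPdf_total] at this; linarith

lemma cdf_neg (z : ℝ) : stdNormalCDF (-z) = ∫ x in Ioi z, gaussPdf x := by
  rw [cdf_eq, ← integral_comp_neg_Ioi]
  congr 1; ext x; simp [gaussPdf]

lemma cdf_symm (z : ℝ) : 1 - stdNormalCDF z = stdNormalCDF (-z) := by
  rw [one_sub_cdf, cdf_neg]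

lemma cdf_diff_eq {a b : ℝ} (h : a ≤ b) :
    stdNormalCDF b - stdNormalCDF a = ∫ x in Ioc a b, gaussPdf x := by
  rw [cdf_eq, cdf_eq, intervalIntegral.integral_Iic_sub_Iic gaussPdf_int.integrableOn gaussPdf_int.integrableOn,
    intervalIntegral.integral_of_le h]

lemma cdf_diff_le {a b M : ℝ} (h : a ≤ b) (hM : ∀ x ∈ Ioc a b, gaussPdf x ≤ M) :
    stdNormalCDF b - stdNormalCDF a ≤ M * (b - a) := by
  rw [cdf_diff_eq h]
  calc ∫ x in Ioc a b, gaussPdf x ≤ ∫ _ in Ioc a b, M := by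
        refine setIntegral_mono_on gaussPdf_int.integrableOn (integrableOn_const measure_Ioc_lt_top.ne)
          measurableSet_Ioc hM
    _ = M * (b - a) := by
        rw [setIntegral_const, measureReal_def, Real.volume_Ioc, smul_eq_mul, ENNReal.toReal_ofReal (by linarith)]
        ring

lemma cdf_tail {x : ℝ} (hx : 0 ≤ x) :
    stdNormalCDF (-x) ≤ Real.sqrt 2 * Real.exp (-x^2/4) := by
  have key : ∀ t ∈ Iic (-x), gaussPdf t ≤ Real.exp (-x^2/4) * (Real.exp (-(1/4) * t^2) / Real.sqrt (2*Real.pi)) := by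
    intro t ht
    simp only [mem_Iic] at ht
    have h2 : x^2 ≤ t^2 := by nlinarith
    rw [gaussPdf, ← mul_div_assoc, ← Real.exp_add]
    have h3 : -t^2/2 ≤ -x^2/4 + -(1/4)*t^2 := by linarith
    gcongr
  have int4 : Integrable (fun t : ℝ => Real.exp (-x^2/4) * (Real.exp (-(1/4) * t^2) / Real.sqrt (2*Real.pi))) :=
    (((integrable_exp_neg_mul_sq (by norm_num : (0:ℝ) < 1/4)).div_const _).const_mul _)
  have step1 : stdNormalCDF (-x) ≤ ∫ t in Iic (-x), Real.exp (-x^2/4) * (Real.exp (-(1/4) * t^2) / Real.sqrt (2*Real.pi)) := by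
    rw [cdf_eq]
    exact setIntegral_mono_on gaussPdf_int.integrableOn int4.integrableOn measurableSet_Iic key
  have step2 : (∫ t in Iic (-x), Real.exp (-x^2/4) * (Real.exp (-(1/4) * t^2) / Real.sqrt (2*Real.pi)))
      ≤ ∫ t : ℝ, Real.exp (-x^2/4) * (Real.exp (-(1/4) * t^2) / Real.sqrt (2*Real.pi)) := by
    refine setIntegral_le_integral int4 (Filter.Eventually.of_forall fun t => ?_)
    positivity
  have step3 : (∫ t : ℝ, Real.exp (-x^2/4) * (Real.exp (-(1/4) * t^2) / Real.sqrt (2*Real.pi)))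
      = Real.exp (-x^2/4) * (Real.sqrt (4*Real.pi) / Real.sqrt (2*Real.pi)) := by
    rw [integral_const_mul, integral_div, integral_gaussian]
    norm_num
    ring
  have step4 : Real.sqrt (4*Real.pi) / Real.sqrt (2*Real.pi) = Real.sqrt 2 := by
    rw [show (4:ℝ)*Real.pi = 2*(2*Real.pi) by ring, Real.sqrt_mul (by norm_num),
      mul_div_assoc, div_self (Real.sqrt_pos.2 (by positivity)).ne', mul_one]
  calc stdNormalCDF (-x) ≤ _ := step1
    _ ≤ _ := step2
    _ = _ := by rw [step3, step4]; ring

lemma bern_lower {b w : ℝ} (hb : 0 < b) (hw : -1 < w) : 1 - b*w ≤ (1+w) ^ (-b) := by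
  have hx : (0:ℝ) < 1 + w := by linarith
  rw [Real.rpow_def_of_pos hx]
  have h1 : Real.log (1+w) ≤ w := by
    have := Real.log_le_sub_one_of_pos hx; linarith
  have h2 : Real.log (1+w) * (-b) + 1 ≤ Real.exp (Real.log (1+w) * (-b)) :=
    Real.add_one_le_exp _
  nlinarith [mul_le_mul_of_nonneg_left h1 hb.le]

lemma exp_convex_pow {b w : ℝ} (hb1 : 1 ≤ b) (hb2 : b ≤ 2) (hw : -1 < w) :
    (1+w) ^ (-b) ≤ (2-b)/(1+w) + (b-1)/(1+w)^2 := by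
  have hx : (0:ℝ) < 1 + w := by linarith
  set L := Real.log (1+w) with hL
  have key := convexOn_exp.2 (mem_univ (-L)) (mem_univ (-2*L))
    (by linarith : (0:ℝ) ≤ 2 - b) (by linarith : (0:ℝ) ≤ b - 1) (by ring)
  have e1 : Real.exp (-L) = (1+w)⁻¹ := by rw [Real.exp_neg, Real.exp_log hx]
  have e2 : Real.exp (-2*L) = ((1+w)^2)⁻¹ := by
    rw [show -2*L = -(L+L) by ring, Real.exp_neg, Real.exp_add, Real.exp_log hx, sq]
  have e3 : (2-b) • (-L) + (b-1) • (-2*L) = L * (-b) := by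
    simp only [smul_eq_mul]; ring
  rw [e3, e1, e2] at key
  rw [Real.rpow_def_of_pos hx, ← hL]
  calc Real.exp (L * (-b)) ≤ (2-b) * (1+w)⁻¹ + (b-1) * ((1+w)^2)⁻¹ := key
    _ = (2-b)/(1+w) + (b-1)/(1+w)^2 := by rw [div_eq_mul_inv, div_eq_mul_inv]

lemma f_upper {b w : ℝ} (hb1 : 1 ≤ b) (hb2 : b ≤ 2) (hw : |w| ≤ 1/24) :
    b*w - 1 + (1+w) ^ (-b) ≤ 3*b*w^2 := by
  obtain ⟨hw1, hw2⟩ := abs_le.1 hw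
  have hx : (0:ℝ) < 1 + w := by linarith
  have h1 := exp_convex_pow hb1 hb2 (by linarith : -1 < w)
  have h2 : (2-b)/(1+w) + (b-1)/(1+w)^2 ≤ 1 - b*w + 3*b*w^2 := by
    rw [div_add_div _ _ hx.ne' (by positivity), div_le_iff₀ (by positivity)]
    nlinarith [sq_nonneg w, mul_nonneg (sq_nonneg w) (show (0:ℝ) ≤ b*(1+5*w) by nlinarith),
      mul_nonneg (mul_nonneg (by linarith : (0:ℝ) ≤ b) (sq_nonneg w)) (sq_nonneg w),
      mul_pos hx (mul_pos hx hx)]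
  linarith

lemma rpow_anti {b x y : ℝ} (hb : 0 ≤ b) (hx : 0 < x) (hxy : x ≤ y) :
    y ^ (-b) ≤ x ^ (-b) := by
  rw [Real.rpow_neg hx.le, Real.rpow_neg (hx.trans_le hxy).le]
  exact inv_anti₀ (Real.rpow_pos_of_pos hx _) (Real.rpow_le_rpow hx.le hxy hb)

lemma cdf_le_one (z : ℝ) : stdNormalCDF z ≤ 1 := by
  rw [cdf_eq, ← gaussPdf_total]
  exact setIntegral_le_integral gaussPdf_int (Filter.Eventually.of_forall gaussPdf_nonneg)

lemma exp_neg_le_inv {v : ℝ} (hv : 0 < v) : Real.exp (-v) ≤ v⁻¹ := by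
  rw [Real.exp_neg]
  exact inv_anti₀ hv (by linarith [Real.add_one_le_exp v])

lemma sqrt_two_pi_ge_one : (1:ℝ) ≤ Real.sqrt (2*Real.pi) := by
  rw [show (1:ℝ) = Real.sqrt 1 by simp]
  exact Real.sqrt_le_sqrt (by nlinarith [Real.pi_gt_three])

lemma sqrt_two_le_two : Real.sqrt 2 ≤ 2 := by
  nlinarith [Real.sq_sqrt (show (0:ℝ) ≤ 2 by norm_num), Real.sqrt_nonneg 2]

set_option maxHeartbeats 1000000 in
lemma core_est {a b w : ℝ} (ha0 : 0 < a) (ha1 : a ≤ 1) (hb1 : 1 ≤ b) (hb2 : b ≤ 3/2)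
    (hw : -1 < w) :
    |stdNormalCDF ((1 - (1+w) ^ (-b))/b / a) - stdNormalCDF (w/a)| ≤ 20000 * a := by
  have hb0 : (0:ℝ) < b := by linarith
  set f : ℝ := (1 - (1+w) ^ (-b))/b with hf
  have hfw : f ≤ w := by
    rw [hf, div_le_iff₀ hb0]
    nlinarith [bern_lower hb0 hw]
  have hmono : stdNormalCDF (f/a) ≤ stdNormalCDF (w/a) :=
    cdf_mono ((div_le_div_iff_of_pos_right ha0).2 hfw)
  rw [abs_sub_comm, abs_of_nonneg (by linarith)]
  rcases le_or_gt |w| (1/24) with hcase | hcase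
  · -- middle regime
    obtain ⟨hw1, hw2⟩ := abs_le.1 hcase
    have hflow : w - 3*w^2 ≤ f := by
      rw [hf, le_div_iff₀ hb0]
      nlinarith [f_upper hb1 (by linarith) hcase]
    have hupper : w - f ≤ 3*w^2 := by linarith
    have hfhalf : 0 ≤ w → w/2 ≤ f := fun hw0 => by nlinarith
    set M := Real.exp (-((w/(2*a))^2/2)) / Real.sqrt (2*Real.pi) with hM
    have hMle : ∀ t ∈ Ioc (f/a) (w/a), gaussPdf t ≤ M := by
      intro t ht
      obtain ⟨ht1, ht2⟩ := ht
      have hsq : (w/(2*a))^2 ≤ t^2 := by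
        rcases le_or_gt 0 w with hw0 | hw0
        · have h1 : w/(2*a) ≤ f/a := by
            rw [div_le_div_iff₀ (by positivity) ha0]
            nlinarith [hfhalf hw0]
          have h2 : 0 ≤ w/(2*a) := by positivity
          nlinarith
        · have h1 : t ≤ w/a := ht2
          have h2 : w/a < 0 := div_neg_of_neg_of_pos hw0 ha0
          have h3 : (w/a)^2 ≤ t^2 := by nlinarith
          have h4 : w/(2*a) = (w/a)/2 := by ring
          nlinarith [sq_nonneg (w/a)]
      rw [gaussPdf, hM]
      gcongr
      linarith
    have hdiff := cdf_diff_le ((div_le_div_iff_of_pos_right ha0).2 hfw) hMle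
    set u := w^2/(8*a^2) with hu
    have huexp : (w/(2*a))^2/2 = u := by rw [hu]; ring
    have hu0 : 0 ≤ u := by positivity
    have hue : u * Real.exp (-u) ≤ 1 := by
      rw [Real.exp_neg, ← div_eq_mul_inv, div_le_one (Real.exp_pos _)]
      linarith [Real.add_one_le_exp u]
    have hMle2 : M ≤ Real.exp (-u) := by
      rw [hM, huexp]
      calc Real.exp (-u) / Real.sqrt (2*Real.pi) ≤ Real.exp (-u) / 1 := by
            gcongr
            exact sqrt_two_pi_ge_one
        _ = Real.exp (-u) := div_one _
    have hfactor : 3*w^2/a = 24*a*u := by rw [hu]; field_simp; ring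
    calc stdNormalCDF (w/a) - stdNormalCDF (f/a) ≤ M * (w/a - f/a) := hdiff
      _ ≤ Real.exp (-u) * (3*w^2/a) := by
          apply mul_le_mul hMle2 ?_ (by rw [sub_nonneg]; exact (div_le_div_iff_of_pos_right ha0).2 hfw) (Real.exp_nonneg _)
          rw [div_sub_div_same, div_le_div_iff₀ ha0 ha0]
          nlinarith
      _ = 24 * a * (u * Real.exp (-u)) := by rw [hfactor]; ring
      _ ≤ 24 * a * 1 := mul_le_mul_of_nonneg_left hue (by positivity)
      _ ≤ 20000 * a := by nlinarith
  · rcases le_or_gt w 0 with hw0 | hw0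
    · -- w ≤ -1/24
      have hwneg : w ≤ -(1/24) := by
        rcases abs_cases w with ⟨h1,h2⟩|⟨h1,h2⟩ <;> linarith
      have heq : (-(1/24) : ℝ)/a = -(1/(24*a)) := by field_simp
      have h1 : stdNormalCDF (w/a) ≤ stdNormalCDF (-(1/(24*a))) := by
        rw [← heq]
        exact cdf_mono ((div_le_div_iff_of_pos_right ha0).2 hwneg)
      have h2 := cdf_tail (x := 1/(24*a)) (by positivity)
      have hform : (-(1/(24*a))^2/4 : ℝ) = -((1/(24*a))^2/4) := by ring
      rw [hform] at h2
      have hv : (0:ℝ) < (1/(24*a))^2/4 := by positivity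
      have h3 := exp_neg_le_inv hv
      have h4 : ((1/(24*a))^2/4 : ℝ)⁻¹ = 2304*a^2 := by field_simp; ring
      rw [h4] at h3
      have h5 := cdf_nonneg (f/a)
      nlinarith [sqrt_two_le_two, Real.exp_nonneg (-((1/(24*a))^2/4)), Real.sqrt_nonneg 2]
    · -- w ≥ 1/24
      have hwpos : 1/24 ≤ w := by
        rcases abs_cases w with ⟨h1,h2⟩|⟨h1,h2⟩ <;> linarith
      have hmono2 : (1+w) ^ (-b) ≤ (1+1/24 : ℝ) ^ (-b) :=
        rpow_anti (by linarith) (by norm_num) (by linarith)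
      have h0 := f_upper (w := 1/24) hb1 (by linarith) (by rw [abs_of_nonneg] <;> norm_num)
      have hf48 : 1/48 ≤ f := by
        rw [hf, le_div_iff₀ hb0]
        nlinarith
      have hle1 := cdf_le_one (w/a)
      have h1 : stdNormalCDF (w/a) - stdNormalCDF (f/a) ≤ stdNormalCDF (-(f/a)) := by
        have := cdf_symm (f/a); linarith
      have heq : (f : ℝ)/a ≥ 1/(48*a) := by
        rw [ge_iff_le, div_le_div_iff₀ (by positivity) ha0]
        nlinarith
      have h2 : stdNormalCDF (-(f/a)) ≤ stdNormalCDF (-(1/(48*a))) :=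
        cdf_mono (by linarith)
      have h3 := cdf_tail (x := 1/(48*a)) (by positivity)
      have hform : (-(1/(48*a))^2/4 : ℝ) = -((1/(48*a))^2/4) := by ring
      rw [hform] at h3
      have hv : (0:ℝ) < (1/(48*a))^2/4 := by positivity
      have h4 := exp_neg_le_inv hv
      have h5 : ((1/(48*a))^2/4 : ℝ)⁻¹ = 9216*a^2 := by field_simp; ring
      rw [h5] at h4
      nlinarith [sqrt_two_le_two, Real.exp_nonneg (-((1/(48*a))^2/4)), Real.sqrt_nonneg 2]

/-- The estimate `|Φ̄(ν_T(z)) − Φ(z)| ≤ C/√T` used in the proof of the Berry–Esséen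
bound for the moment estimator `k̂`. -/
theorem tail_nu_sub_Phi_bound
    (β : ℝ) (hβ : β ∈ Set.Ioo (1/2 : ℝ) (3/4 : ℝ)) (k : ℝ) (hk : 0 < k) :
    ∃ C : ℝ, 0 < C ∧ ∃ T₀ : ℝ, 0 < T₀ ∧ ∀ T : ℝ, T₀ ≤ T → ∀ z : ℝ,
      (let σβ2 := (4*β - 1) * (1 + Real.Gamma (3 - 4*β) * Real.Gamma (4*β - 1)
        / (Real.Gamma (2*β) * Real.Gamma (2 - 2*β)));
       let σβ := Real.sqrt σβ2;
       0 < 1 + z * σβ / (2*β * Real.sqrt (k*T)) →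
       (let ν := Real.sqrt (k*T/σβ2)
          * ((1 + z * σβ / (2*β * Real.sqrt (k*T))) ^ (-(2*β)) - 1);
        |(1 - stdNormalCDF ν) - stdNormalCDF z| ≤ C / Real.sqrt T)) := by
  obtain ⟨hβ1, hβ2⟩ := hβ
  set σ2 := (4*β - 1) * (1 + Real.Gamma (3 - 4*β) * Real.Gamma (4*β - 1)
    / (Real.Gamma (2*β) * Real.Gamma (2 - 2*β))) with hσ2def
  have hσ2 : 0 < σ2 := by
    have g1 := Real.Gamma_pos_of_pos (show (0:ℝ) < 3 - 4*β by linarith)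
    have g2 := Real.Gamma_pos_of_pos (show (0:ℝ) < 4*β - 1 by linarith)
    have g3 := Real.Gamma_pos_of_pos (show (0:ℝ) < 2*β by linarith)
    have g4 := Real.Gamma_pos_of_pos (show (0:ℝ) < 2 - 2*β by linarith)
    have h5 : 0 < Real.Gamma (3 - 4*β) * Real.Gamma (4*β - 1)
        / (Real.Gamma (2*β) * Real.Gamma (2 - 2*β)) :=
      div_pos (mul_pos g1 g2) (mul_pos g3 g4)
    rw [hσ2def]
    apply mul_pos (by linarith) (by linarith)
  set σ := Real.sqrt σ2 with hσdef
  have hσ : 0 < σ := Real.sqrt_pos.2 hσ2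
  have hβ0 : (0:ℝ) < β := by linarith
  refine ⟨20000 * (σ/(2*β*Real.sqrt k)), by positivity,
    max 1 (σ2/k), lt_of_lt_of_le zero_lt_one (le_max_left _ _), ?_⟩
  intro T hT z
  dsimp only
  intro hz
  have hT1 : (1:ℝ) ≤ T := le_trans (le_max_left _ _) hT
  have hTk : σ2 ≤ k*T := by
    have := le_trans (le_max_right _ _) hT
    rw [div_le_iff₀ hk] at this
    linarith
  have hkT : 0 < k*T := by nlinarith
  have hsT : 0 < Real.sqrt (k*T) := Real.sqrt_pos.2 hkT
  set b := 2*β with hbdef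
  set w := z * σ / (b * Real.sqrt (k*T)) with hwdef
  set a := σ/(b*Real.sqrt (k*T)) with hadef
  have hb0 : (0:ℝ) < b := by rw [hbdef]; linarith
  have ha0 : 0 < a := by rw [hadef]; positivity
  have hb1 : (1:ℝ) ≤ b := by rw [hbdef]; linarith
  have hb2 : b ≤ 3/2 := by rw [hbdef]; linarith
  have ha1 : a ≤ 1 := by
    rw [hadef, div_le_one (by positivity)]
    calc σ = Real.sqrt σ2 := hσdef
      _ ≤ Real.sqrt (k*T) := Real.sqrt_le_sqrt hTk
      _ ≤ b*Real.sqrt (k*T) := by nlinarith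
  have hwza : w = z * a := by rw [hwdef, hadef]; ring
  have hw : -1 < w := by linarith
  have hza : w / a = z := by
    rw [hwza]
    field_simp
  have hν : Real.sqrt (k*T/σ2) * ((1+w) ^ (-b) - 1) = -((1 - (1+w) ^ (-b))/b / a) := by
    have h1 : Real.sqrt (k*T/σ2) = Real.sqrt (k*T)/σ := by
      rw [Real.sqrt_div hkT.le, ← hσdef]
    rw [h1, hadef]
    field_simp
    ring
  rw [hν]
  have h2 : 1 - stdNormalCDF (-((1 - (1+w) ^ (-b))/b / a))
      = stdNormalCDF ((1 - (1+w) ^ (-b))/b / a) := by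
    rw [cdf_symm, neg_neg]
  rw [h2]
  have hmain := core_est ha0 ha1 hb1 hb2 hw
  rw [hza] at hmain
  have hCa : 20000 * (σ/(b*Real.sqrt k)) / Real.sqrt T = 20000 * a := by
    rw [hadef, Real.sqrt_mul hk.le]
    have hsk : 0 < Real.sqrt k := Real.sqrt_pos.2 hk
    have hsTT : 0 < Real.sqrt T := Real.sqrt_pos.2 (by linarith)
    field_simp
  rw [hCa]
  exact hmain
end
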